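/- Let 0 < μ ≤ L, let f ∈ S¹_{μ,L}(ℝ^d) with unique minimizer x⋆, and let 0 < s < 1/L. For any y ∈ ℝ^d, set x⁺ = y − s∇f(y). Then f(x⁺) − f(x⋆) ≤ ⟨∇f(y), y − x⋆⟩ − (s/2)‖∇f(y)‖² − (μ/2)‖x⁺ − x⋆‖². -/

import Mathlib

set_option maxHeartbeats 1000000


open scoped RealInnerProductSpace

variable {E : Type*} [NormedAddCommGroup E] [InnerProductSpace ℝ E] [CompleteSpace E]

lemma aux_line_hasDerivAt (f : E → ℝ) (g x v : E) (t : ℝ)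
    (hf : HasGradientAt f g (x + t • v)) :
    HasDerivAt (fun t : ℝ => f (x + t • v)) ⟪g, v⟫ t := by
  have hc : HasDerivAt (fun t : ℝ => x + t • v) v t := by
    simpa using ((hasDerivAt_id t).smul_const v).const_add x
  have := (hasGradientAt_iff_hasFDerivAt.mp hf).comp_hasDerivAt t hc
  simp [InnerProductSpace.toDual_apply_apply] at this
  exact this

lemma aux_convex_lower (h : E → ℝ) (hconv : ConvexOn ℝ Set.univ h) (x g : E)
    (hg : HasGradientAt h g x) (y : E) : h x + ⟪g, y - x⟫ ≤ h y := by
  have hψ : ConvexOn ℝ Set.univ (fun t : ℝ => h (x + t • (y - x))) := by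
    have key := hconv.comp_affineMap (AffineMap.lineMap x y)
    have : (fun t : ℝ => h (x + t • (y - x))) = (h ∘ (AffineMap.lineMap x y : ℝ →ᵃ[ℝ] E)) := by
      funext t
      simp [Function.comp, AffineMap.lineMap_apply_module', add_comm]
    rw [this]
    simpa using key
  have hd : HasDerivAt (fun t : ℝ => h (x + t • (y - x))) ⟪g, y - x⟫ 0 := by
    apply aux_line_hasDerivAt
    simpa using hg
  have hslope := hψ.le_slope_of_hasDerivAt (Set.mem_univ (0 : ℝ)) (Set.mem_univ 1) one_pos hd
  rw [slope_def_field] at hslope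
  simp at hslope
  linarith

lemma aux_descent (f : E → ℝ) (f' : E → E) (L : ℝ) (hL : 0 ≤ L)
    (hdiff : ∀ z, HasGradientAt f (f' z) z)
    (hlip : ∀ z w, ‖f' z - f' w‖ ≤ L * ‖z - w‖) (a b : E) :
    f b ≤ f a + ⟪f' a, b - a⟫ + L / 2 * ‖b - a‖ ^ 2 := by
  set v := b - a with hv
  set F := fun t : ℝ => f (a + t • v) - t * ⟪f' a, v⟫ - L / 2 * t ^ 2 * ‖v‖ ^ 2 with hF
  have hFd : ∀ t : ℝ, HasDerivAt F (⟪f' (a + t • v), v⟫ - ⟪f' a, v⟫ - L * t * ‖v‖ ^ 2) t := by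
    intro t
    have h1 := aux_line_hasDerivAt f (f' (a + t • v)) a v t (hdiff _)
    have h2 : HasDerivAt (fun t : ℝ => t * ⟪f' a, v⟫) ⟪f' a, v⟫ t := by
      simpa using (hasDerivAt_id t).mul_const (⟪f' a, v⟫)
    have h3 : HasDerivAt (fun t : ℝ => L / 2 * t ^ 2 * ‖v‖ ^ 2) (L * t * ‖v‖ ^ 2) t := by
      have hp : HasDerivAt (fun t : ℝ => t ^ 2) (2 * t) t := by
        simpa using hasDerivAt_pow 2 t
      have := (hp.const_mul (L / 2)).mul_const (‖v‖ ^ 2)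
      exact this.congr_deriv (by ring)
    exact (h1.sub h2).sub h3
  have anti : AntitoneOn F (Set.Icc 0 1) := by
    apply antitoneOn_of_deriv_nonpos (convex_Icc 0 1)
    · exact fun t _ => ((hFd t).differentiableAt).continuousAt.continuousWithinAt
    · exact fun t _ => ((hFd t).differentiableAt).differentiableWithinAt
    · intro t ht
      rw [interior_Icc] at ht
      rw [(hFd t).deriv]
      have hb1 : ⟪f' (a + t • v) - f' a, v⟫ ≤ ‖f' (a + t • v) - f' a‖ * ‖v‖ :=
        real_inner_le_norm _ _
      have hb2 : ‖f' (a + t • v) - f' a‖ ≤ L * (t * ‖v‖) := by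
        have := hlip (a + t • v) a
        rwa [add_sub_cancel_left, norm_smul, Real.norm_eq_abs, abs_of_pos ht.1] at this
      have hb3 : ⟪f' (a + t • v), v⟫ - ⟪f' a, v⟫ ≤ L * (t * ‖v‖) * ‖v‖ := by
        rw [inner_sub_left] at hb1
        exact hb1.trans (mul_le_mul_of_nonneg_right hb2 (norm_nonneg v))
      nlinarith [sq_nonneg ‖v‖]
  have h01 : F 1 ≤ F 0 :=
    anti (Set.mem_Icc.mpr ⟨le_refl 0, zero_le_one⟩) (Set.mem_Icc.mpr ⟨zero_le_one, le_refl 1⟩)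
      zero_le_one
  have e1 : a + (1 : ℝ) • v = b := by simp [hv]
  have e0 : a + (0 : ℝ) • v = a := by simp
  simp only [hF, e1, e0, one_pow, one_mul, mul_zero, zero_mul, sub_zero] at h01
  linarith

theorem gradient_step_minimizer_inequality {d : ℕ} (μ L s : ℝ)
    (hμ : 0 < μ) (hμL : μ ≤ L) (hs : 0 < s) (hsL : s < 1 / L)
    (f : EuclideanSpace ℝ (Fin d) → ℝ)
    (f' : EuclideanSpace ℝ (Fin d) → EuclideanSpace ℝ (Fin d))
    (hdiff : ∀ z, HasGradientAt f (f' z) z)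
    (hlip : ∀ z w, ‖f' z - f' w‖ ≤ L * ‖z - w‖)
    (hsc : ConvexOn ℝ Set.univ (fun z => f z - μ / 2 * ‖z‖ ^ 2))
    (xstar : EuclideanSpace ℝ (Fin d)) (hmin : ∀ z, f xstar ≤ f z)
    (huniq : ∀ z, (∀ w, f z ≤ f w) → z = xstar)
    :
    ∀ y : EuclideanSpace ℝ (Fin d),
      f (y - s • f' y) - f xstar ≤
        ⟪f' y, y - xstar⟫ - s / 2 * ‖f' y‖ ^ 2 - μ / 2 * ‖(y - s • f' y) - xstar‖ ^ 2 := by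
  intro y
  have hL : 0 < L := lt_of_lt_of_le hμ hμL
  have hsL1 : s * L ≤ 1 := by
    rw [lt_div_iff₀ hL] at hsL
    linarith
  set g := f' y with hg
  set X := y - s • g with hX
  -- gradient of f vanishes at xstar
  have hx0 : f' xstar = 0 := by
    have hlm : IsLocalMin f xstar := Filter.Eventually.of_forall hmin
    have := hlm.hasFDerivAt_eq_zero (hasGradientAt_iff_hasFDerivAt.mp (hdiff xstar))
    have h2 := DFunLike.congr_fun this (f' xstar)
    simp only [InnerProductSpace.toDual_apply_apply, ContinuousLinearMap.zero_apply] at h2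
    exact inner_self_eq_zero.mp h2
  -- gradient of z ↦ μ/2 ‖z‖² is μ • z
  have hq : ∀ z : EuclideanSpace ℝ (Fin d),
      HasGradientAt (fun z => μ / 2 * ‖z‖ ^ 2) ((μ : ℝ) • z) z := by
    intro z
    rw [hasGradientAt_iff_hasFDerivAt]
    have hi : HasFDerivAt (fun z : EuclideanSpace ℝ (Fin d) => ⟪z, z⟫)
        ((fderivInnerCLM ℝ (z, z)).comp ((ContinuousLinearMap.id ℝ _).prod
          (ContinuousLinearMap.id ℝ _))) z :=
      (hasFDerivAt_id z).inner ℝ (hasFDerivAt_id z)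
    have hi2 := hi.const_mul (μ / 2)
    have hfun : (fun z : EuclideanSpace ℝ (Fin d) => μ / 2 * ⟪z, z⟫) =
        fun z => μ / 2 * ‖z‖ ^ 2 := by
      funext w
      rw [real_inner_self_eq_norm_sq]
    rw [hfun] at hi2
    refine hi2.congr_fderiv ?_
    ext v
    simp only [InnerProductSpace.toDual_apply_apply, ContinuousLinearMap.smul_apply,
      ContinuousLinearMap.coe_comp', Function.comp_apply, ContinuousLinearMap.prod_apply,
      ContinuousLinearMap.coe_id', id_eq, fderivInnerCLM_apply, smul_eq_mul,
      real_inner_smul_left]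
    rw [real_inner_comm v z]
    ring
  -- strong convexity first-order inequality
  have hSC : ∀ z w : EuclideanSpace ℝ (Fin d),
      f z + ⟪f' z, w - z⟫ + μ / 2 * ‖w - z‖ ^ 2 ≤ f w := by
    intro z w
    have hgrad : HasGradientAt (fun z => f z - μ / 2 * ‖z‖ ^ 2) (f' z - μ • z) z := by
      rw [hasGradientAt_iff_hasFDerivAt]
      have := (hasGradientAt_iff_hasFDerivAt.mp (hdiff z)).sub
        (hasGradientAt_iff_hasFDerivAt.mp (hq z))
      refine this.congr_fderiv ?_
      ext v
      simp [InnerProductSpace.toDual_apply_apply, inner_sub_left]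
    have key := aux_convex_lower _ hsc z (f' z - μ • z) hgrad w
    have expand : ⟪f' z - μ • z, w - z⟫ = ⟪f' z, w - z⟫ - μ * ⟪z, w - z⟫ := by
      rw [inner_sub_left, real_inner_smul_left]
    have quad : μ / 2 * ‖w - z‖ ^ 2 = μ / 2 * ‖w‖ ^ 2 - μ * ⟪z, w - z⟫ - μ / 2 * ‖z‖ ^ 2 := by
      rw [inner_sub_right, norm_sub_sq_real, real_inner_comm w z, real_inner_self_eq_norm_sq]
      ring
    rw [expand] at key
    linarith
  -- descent lemma for f at y with step s
  have hdescf := aux_descent f f' L hL.le hdiff hlip y X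
  have hXy : X - y = -(s • g) := by rw [hX]; abel
  have hdescf' : f X ≤ f y - s / 2 * ‖g‖ ^ 2 := by
    rw [hXy] at hdescf
    have e1 : ⟪g, -(s • g)⟫ = -(s * ‖g‖ ^ 2) := by
      rw [inner_neg_right, real_inner_smul_right, real_inner_self_eq_norm_sq]
    have e2 : ‖-(s • g)‖ ^ 2 = s ^ 2 * ‖g‖ ^ 2 := by
      rw [norm_neg, norm_smul, Real.norm_eq_abs, mul_pow, sq_abs]
    rw [e1, e2] at hdescf
    nlinarith [sq_nonneg ‖g‖, mul_nonneg hs.le (sq_nonneg ‖g‖)]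
  -- co-coercivity: ⟪g, y - xstar⟫ ≥ f y - f xstar + 1/(2L) ‖g‖²
  set φ := fun z : EuclideanSpace ℝ (Fin d) => f z - ⟪g, z⟫ with hφ
  set φ' := fun z : EuclideanSpace ℝ (Fin d) => f' z - g with hφ'
  have hφdiff : ∀ z, HasGradientAt φ (φ' z) z := by
    intro z
    rw [hasGradientAt_iff_hasFDerivAt]
    have := (hasGradientAt_iff_hasFDerivAt.mp (hdiff z)).sub
      (InnerProductSpace.toDual ℝ (EuclideanSpace ℝ (Fin d)) g).hasFDerivAt
    refine this.congr_fderiv ?_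
    ext v
    simp only [hφ', InnerProductSpace.toDual_apply_apply, ContinuousLinearMap.sub_apply,
      inner_sub_left]
  have hφlip : ∀ z w, ‖φ' z - φ' w‖ ≤ L * ‖z - w‖ := by
    intro z w
    simpa [hφ', sub_sub_sub_cancel_right] using hlip z w
  set w := xstar + (L)⁻¹ • g with hw
  have h1 : φ y ≤ φ w := by
    have := hSC y w
    have expand : ⟪f' y, w - y⟫ = ⟪g, w⟫ - ⟪g, y⟫ := by
      rw [← hg, inner_sub_right]
    simp only [hφ]
    nlinarith [sq_nonneg ‖w - y‖, mul_nonneg hμ.le (sq_nonneg ‖w - y‖)]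
  have h2 := aux_descent φ φ' L hL.le hφdiff hφlip xstar w
  have hwx : w - xstar = (L)⁻¹ • g := by rw [hw]; abel
  have h2' : φ w ≤ φ xstar - 1 / (2 * L) * ‖g‖ ^ 2 := by
    rw [hwx] at h2
    have e0 : φ' xstar = -g := by simp [hφ', hx0]
    have e1 : ⟪φ' xstar, (L)⁻¹ • g⟫ = -(L⁻¹ * ‖g‖ ^ 2) := by
      rw [e0, inner_neg_left, real_inner_smul_right, real_inner_self_eq_norm_sq]
    have e2 : ‖(L)⁻¹ • g‖ ^ 2 = (L⁻¹) ^ 2 * ‖g‖ ^ 2 := by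
      rw [norm_smul, Real.norm_eq_abs, mul_pow, sq_abs]
    rw [e1, e2] at h2
    have heq : φ xstar + -(L⁻¹ * ‖g‖ ^ 2) + L / 2 * ((L⁻¹) ^ 2 * ‖g‖ ^ 2) =
        φ xstar - 1 / (2 * L) * ‖g‖ ^ 2 := by
      field_simp
      ring
    linarith [h2, heq.le, heq.ge]
  have hco0 : f y - f xstar + 1 / (2 * L) * ‖g‖ ^ 2 ≤ ⟪g, y - xstar⟫ := by
    have := h1.trans h2'
    simp only [hφ] at this
    rw [inner_sub_right]
    linarith
  have hco : s / 2 * ‖g‖ ^ 2 ≤ ⟪g, y - xstar⟫ := by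
    have hfy : f xstar ≤ f y := hmin y
    have hb : s / 2 ≤ 1 / (2 * L) := by
      rw [div_le_div_iff₀ (by norm_num : (0:ℝ) < 2) (by positivity : (0:ℝ) < 2 * L)]
      nlinarith
    have := mul_le_mul_of_nonneg_right hb (sq_nonneg ‖g‖)
    linarith
  -- final combination
  have hsc2 := hSC y xstar
  have e3 : ⟪f' y, xstar - y⟫ = -⟪g, y - xstar⟫ := by
    rw [← hg, ← inner_neg_right]
    congr 1
    abel
  have e4 : ‖xstar - y‖ = ‖y - xstar‖ := norm_sub_rev _ _
  rw [e3, e4] at hsc2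
  have expandX : ‖X - xstar‖ ^ 2 =
      ‖y - xstar‖ ^ 2 - 2 * s * ⟪g, y - xstar⟫ + s ^ 2 * ‖g‖ ^ 2 := by
    have : X - xstar = (y - xstar) - s • g := by rw [hX]; abel
    rw [this, norm_sub_sq_real, real_inner_smul_right, real_inner_comm, norm_smul,
      Real.norm_eq_abs, mul_pow, sq_abs]
    ring
  rw [expandX]
  nlinarith [mul_nonneg (mul_nonneg hμ.le hs.le) (sub_nonneg.mpr hco)]
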